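/- The Synge energy of a relativistic monatomic gas satisfies the ultrarelativistic limit e/p → 3: namely, lim_{γ→0⁺} (γ · K₃(γ)/K₂(γ) − 1) = 3. -/

import Mathlib

open MeasureTheory Real Filter Set

/-- Modified Bessel function of the second kind, integral representation. -/
noncomputable def besselK (n : ℕ) (x : ℝ) : ℝ :=
  ∫ t in Set.Ioi (0 : ℝ), Real.exp (-x * Real.cosh t) * Real.cosh (n * t)

/-- Dimensionless energy-to-pressure ratio `r(γ, a) = e/p` of a relativistic
gas with internal structure, state-density measure `φ(I) = I^a`. -/
noncomputable def rRatio (γ a : ℝ) : ℝ :=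
  (∫ s in Set.Ioi γ, (besselK 3 s - besselK 2 s / s) * (s - γ) ^ a) /
  (∫ s in Set.Ioi γ, (besselK 2 s / s) * (s - γ) ^ a)

namespace UltraRel

/-- change of variables `v = x * sinh t` -/
lemma subst_key (x : ℝ) (hx : 0 < x) (g : ℝ → ℝ) :
    ∫ v in Set.Ioi (0 : ℝ), g v
      = ∫ t in Set.Ioi (0 : ℝ), (x * Real.cosh t) * g (x * Real.sinh t) := by
  have himg : (fun t => x * Real.sinh t) '' Set.Ioi (0 : ℝ) = Set.Ioi (0 : ℝ) := by
    ext v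
    constructor
    · rintro ⟨t, ht, rfl⟩
      exact mul_pos hx (by rwa [Real.sinh_pos_iff])
    · intro hv
      refine ⟨Real.arsinh (v / x), ?_, ?_⟩
      · rw [Set.mem_Ioi, Real.arsinh_pos_iff]
        exact div_pos hv hx
      · show x * Real.sinh _ = v
        rw [Real.sinh_arsinh, mul_div_cancel₀ _ hx.ne']
  have hmono : StrictMono (fun t => x * Real.sinh t) :=
    fun a b h => by exact mul_lt_mul_of_pos_left (Real.sinh_lt_sinh.mpr h) hx
  have := MeasureTheory.integral_image_eq_integral_abs_deriv_smul
    (measurableSet_Ioi (a := (0:ℝ)))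
    (f := fun t => x * Real.sinh t) (f' := fun t => x * Real.cosh t)
    (fun t _ => ((Real.hasDerivAt_sinh t).const_mul x).hasDerivWithinAt)
    hmono.injective.injOn g
  rw [himg] at this
  rw [this]
  refine setIntegral_congr_fun measurableSet_Ioi fun t _ => ?_
  rw [smul_eq_mul, abs_of_pos (mul_pos hx (Real.cosh_pos t))]

lemma sqrt_aux (x : ℝ) (hx : 0 < x) (t : ℝ) :
    Real.sqrt (x ^ 2 + (x * Real.sinh t) ^ 2) = x * Real.cosh t := by
  have : x ^ 2 + (x * Real.sinh t) ^ 2 = (x * Real.cosh t) ^ 2 := by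
    have := Real.cosh_sq t
    nlinarith
  rw [this, Real.sqrt_sq (mul_pos hx (Real.cosh_pos t)).le]

lemma K3_scaled (x : ℝ) (hx : 0 < x) :
    x ^ 3 * besselK 3 x
      = ∫ v in Set.Ioi (0 : ℝ),
          Real.exp (-Real.sqrt (x ^ 2 + v ^ 2)) * (4 * v ^ 2 + x ^ 2) := by
  rw [subst_key x hx (fun v => Real.exp (-Real.sqrt (x ^ 2 + v ^ 2)) * (4 * v ^ 2 + x ^ 2))]
  rw [besselK, ← MeasureTheory.integral_const_mul]
  refine setIntegral_congr_fun measurableSet_Ioi fun t _ => ?_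
  rw [sqrt_aux x hx t]
  have hc := Real.cosh_sq t
  push_cast
  rw [Real.cosh_three_mul, neg_mul]
  linear_combination (4 * x ^ 3 * Real.cosh t * Real.exp (-(x * Real.cosh t))) * hc

lemma K2_scaled (x : ℝ) (hx : 0 < x) :
    x ^ 2 * besselK 2 x
      = ∫ v in Set.Ioi (0 : ℝ),
          Real.exp (-Real.sqrt (x ^ 2 + v ^ 2)) * (2 * v ^ 2 + x ^ 2)
            / Real.sqrt (x ^ 2 + v ^ 2) := by
  rw [subst_key x hx
    (fun v => Real.exp (-Real.sqrt (x ^ 2 + v ^ 2)) * (2 * v ^ 2 + x ^ 2)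
      / Real.sqrt (x ^ 2 + v ^ 2))]
  rw [besselK, ← MeasureTheory.integral_const_mul]
  refine setIntegral_congr_fun measurableSet_Ioi fun t _ => ?_
  rw [sqrt_aux x hx t]
  have hne : x * Real.cosh t ≠ 0 := (mul_pos hx (Real.cosh_pos t)).ne'
  have hc := Real.cosh_sq t
  rw [mul_div_assoc', mul_div_cancel_left₀ _ hne]
  push_cast
  rw [Real.cosh_two_mul, neg_mul]
  linear_combination ((x ^ 2) * Real.exp (-(x * Real.cosh t))) * hc

lemma integrable_pow_exp (n : ℕ) :
    MeasureTheory.IntegrableOn (fun v : ℝ => Real.exp (-v) * v ^ n) (Set.Ioi 0) := by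
  have h := Real.GammaIntegral_convergent (s := (n : ℝ) + 1) (by positivity)
  refine h.congr_fun (fun v hv => ?_) measurableSet_Ioi
  rw [add_sub_cancel_right]
  simp only [Real.rpow_natCast]

lemma integral_pow_exp (n : ℕ) :
    ∫ v in Set.Ioi (0 : ℝ), Real.exp (-v) * v ^ n = (Nat.factorial n : ℝ) := by
  have h := Real.Gamma_eq_integral (s := (n : ℝ) + 1) (by positivity)
  rw [Real.Gamma_nat_eq_factorial] at h
  rw [h]
  refine setIntegral_congr_fun measurableSet_Ioi fun v _ => ?_
  rw [add_sub_cancel_right, Real.rpow_natCast]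

lemma lim3 : Filter.Tendsto
    (fun x : ℝ => ∫ v in Set.Ioi (0 : ℝ),
        Real.exp (-Real.sqrt (x ^ 2 + v ^ 2)) * (4 * v ^ 2 + x ^ 2))
    (nhdsWithin 0 (Set.Ioi 0)) (nhds 8) := by
  have key : Filter.Tendsto
      (fun x : ℝ => ∫ v in Set.Ioi (0 : ℝ),
          Real.exp (-Real.sqrt (x ^ 2 + v ^ 2)) * (4 * v ^ 2 + x ^ 2))
      (nhdsWithin 0 (Set.Ioi 0))
      (nhds (∫ v in Set.Ioi (0 : ℝ), Real.exp (-v) * (4 * v ^ 2))) := by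
    refine MeasureTheory.tendsto_integral_filter_of_dominated_convergence
      (fun v => Real.exp (-v) * (4 * v ^ 2 + 1)) ?_ ?_ ?_ ?_
    · filter_upwards with x
      exact (Continuous.aestronglyMeasurable (by fun_prop))
    · filter_upwards [Ioo_mem_nhdsGT_of_mem (Set.mem_Ico.mpr ⟨le_refl (0:ℝ), one_pos⟩)]
        with x hx
      filter_upwards [MeasureTheory.ae_restrict_mem measurableSet_Ioi] with v hv
      have hv0 : (0:ℝ) < v := hv
      have hsq : v ≤ Real.sqrt (x ^ 2 + v ^ 2) :=
        (Real.le_sqrt' hv0).mpr (by nlinarith)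
      have h1 : Real.exp (-Real.sqrt (x ^ 2 + v ^ 2)) ≤ Real.exp (-v) :=
        Real.exp_le_exp.mpr (by linarith)
      have h2 : 4 * v ^ 2 + x ^ 2 ≤ 4 * v ^ 2 + 1 := by nlinarith [hx.1, hx.2]
      rw [Real.norm_eq_abs, abs_of_nonneg (by positivity)]
      exact mul_le_mul h1 h2 (by positivity) (Real.exp_pos _).le
    · have h2 := integrable_pow_exp 2
      have h0 := integrable_pow_exp 0
      exact ((h2.const_mul 4).add h0).congr
        (MeasureTheory.ae_of_all _ (fun v => by simp; ring))
    · filter_upwards [MeasureTheory.ae_restrict_mem measurableSet_Ioi] with v hv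
      have hv0 : (0:ℝ) < v := hv
      have hcont : Continuous (fun x : ℝ =>
          Real.exp (-Real.sqrt (x ^ 2 + v ^ 2)) * (4 * v ^ 2 + x ^ 2)) := by fun_prop
      have := (hcont.tendsto 0).mono_left (nhdsWithin_le_nhds (s := Set.Ioi (0:ℝ)))
      simpa [Real.sqrt_sq hv0.le] using this
  have : (∫ v in Set.Ioi (0 : ℝ), Real.exp (-v) * (4 * v ^ 2)) = 8 := by
    have : (∫ v in Set.Ioi (0 : ℝ), Real.exp (-v) * (4 * v ^ 2))
        = 4 * ∫ v in Set.Ioi (0 : ℝ), Real.exp (-v) * v ^ 2 := by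
      rw [← MeasureTheory.integral_const_mul]
      exact setIntegral_congr_fun measurableSet_Ioi fun v _ => by ring
    rw [this, integral_pow_exp 2]
    norm_num
  rwa [this] at key

lemma lim2 : Filter.Tendsto
    (fun x : ℝ => ∫ v in Set.Ioi (0 : ℝ),
        Real.exp (-Real.sqrt (x ^ 2 + v ^ 2)) * (2 * v ^ 2 + x ^ 2)
          / Real.sqrt (x ^ 2 + v ^ 2))
    (nhdsWithin 0 (Set.Ioi 0)) (nhds 2) := by
  have key : Filter.Tendsto
      (fun x : ℝ => ∫ v in Set.Ioi (0 : ℝ),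
          Real.exp (-Real.sqrt (x ^ 2 + v ^ 2)) * (2 * v ^ 2 + x ^ 2)
            / Real.sqrt (x ^ 2 + v ^ 2))
      (nhdsWithin 0 (Set.Ioi 0))
      (nhds (∫ v in Set.Ioi (0 : ℝ), Real.exp (-v) * (2 * v))) := by
    refine MeasureTheory.tendsto_integral_filter_of_dominated_convergence
      (fun v => Real.exp (-v) * (2 * v + 1)) ?_ ?_ ?_ ?_
    · filter_upwards [Ioo_mem_nhdsGT_of_mem (Set.mem_Ico.mpr ⟨le_refl (0:ℝ), one_pos⟩)]
        with x hx
      have hx0 : (0:ℝ) < x := hx.1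
      have hden : ∀ v : ℝ, Real.sqrt (x ^ 2 + v ^ 2) ≠ 0 := by
        intro v
        have : (0:ℝ) < x ^ 2 + v ^ 2 := by positivity
        positivity
      exact Continuous.aestronglyMeasurable
        (Continuous.div (by fun_prop) (by fun_prop) hden)
    · filter_upwards [Ioo_mem_nhdsGT_of_mem (Set.mem_Ico.mpr ⟨le_refl (0:ℝ), one_pos⟩)]
        with x hx
      filter_upwards [MeasureTheory.ae_restrict_mem measurableSet_Ioi] with v hv
      have hv0 : (0:ℝ) < v := hv
      have hx0 : (0:ℝ) < x := hx.1
      have hspos : (0:ℝ) < Real.sqrt (x ^ 2 + v ^ 2) := by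
        have : (0:ℝ) < x ^ 2 + v ^ 2 := by positivity
        positivity
      have hsv : v ≤ Real.sqrt (x ^ 2 + v ^ 2) :=
        (Real.le_sqrt' hv0).mpr (by nlinarith)
      have hsx : x ≤ Real.sqrt (x ^ 2 + v ^ 2) :=
        (Real.le_sqrt' hx0).mpr (by nlinarith)
      have h1 : Real.exp (-Real.sqrt (x ^ 2 + v ^ 2)) ≤ Real.exp (-v) :=
        Real.exp_le_exp.mpr (by linarith)
      have hfrac : (2 * v ^ 2 + x ^ 2) / Real.sqrt (x ^ 2 + v ^ 2) ≤ 2 * v + 1 := by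
        rw [div_le_iff₀ hspos]
        nlinarith [hx.2]
      rw [Real.norm_eq_abs, abs_of_nonneg (by positivity), mul_div_assoc]
      refine mul_le_mul h1 hfrac (by positivity) (Real.exp_pos _).le
    · have h1 := integrable_pow_exp 1
      have h0 := integrable_pow_exp 0
      exact ((h1.const_mul 2).add h0).congr
        (MeasureTheory.ae_of_all _ (fun v => by simp; ring))
    · filter_upwards [MeasureTheory.ae_restrict_mem measurableSet_Ioi] with v hv
      have hv0 : (0:ℝ) < v := hv
      have hcont : ContinuousAt (fun x : ℝ =>
          Real.exp (-Real.sqrt (x ^ 2 + v ^ 2)) * (2 * v ^ 2 + x ^ 2)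
            / Real.sqrt (x ^ 2 + v ^ 2)) 0 := by
        refine ContinuousAt.div (by fun_prop) (by fun_prop) ?_
        simp [Real.sqrt_sq hv0.le]
        exact hv0.ne'
      have := hcont.tendsto.mono_left (nhdsWithin_le_nhds (s := Set.Ioi (0:ℝ)))
      have hval : Real.exp (-Real.sqrt ((0:ℝ) ^ 2 + v ^ 2)) * (2 * v ^ 2 + (0:ℝ) ^ 2)
          / Real.sqrt ((0:ℝ) ^ 2 + v ^ 2) = Real.exp (-v) * (2 * v) := by
        rw [show (0:ℝ) ^ 2 + v ^ 2 = v ^ 2 by ring, Real.sqrt_sq hv0.le]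
        field_simp
        ring
      rwa [hval] at this
  have : (∫ v in Set.Ioi (0 : ℝ), Real.exp (-v) * (2 * v)) = 2 := by
    have : (∫ v in Set.Ioi (0 : ℝ), Real.exp (-v) * (2 * v))
        = 2 * ∫ v in Set.Ioi (0 : ℝ), Real.exp (-v) * v ^ 1 := by
      rw [← MeasureTheory.integral_const_mul]
      exact setIntegral_congr_fun measurableSet_Ioi fun v _ => by ring
    rw [this, integral_pow_exp 1]
    norm_num
  rwa [this] at key

end UltraRel

/-- Ultrarelativistic limit of the Synge energy of a monatomic gas: `e/p → 3`. -/
theorem ultrarelativistic_limit_synge_monatomic :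
    Filter.Tendsto (fun γ : ℝ => γ * besselK 3 γ / besselK 2 γ - 1)
      (nhdsWithin 0 (Set.Ioi 0)) (nhds 3) := by
  have h := (UltraRel.lim3.div UltraRel.lim2 (by norm_num)).sub
    (tendsto_const_nhds (x := (1:ℝ)))
  have h84 : (8:ℝ) / 2 - 1 = 3 := by norm_num
  rw [h84] at h
  refine h.congr' ?_
  filter_upwards [self_mem_nhdsWithin] with γ hγ
  have hγ0 : (0:ℝ) < γ := hγ
  simp only [Pi.div_apply]
  rw [← UltraRel.K3_scaled γ hγ0, ← UltraRel.K2_scaled γ hγ0]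
  congr 1
  rw [show γ ^ 3 * besselK 3 γ = γ ^ 2 * (γ * besselK 3 γ) by ring,
    mul_div_mul_left _ _ (by positivity : γ ^ 2 ≠ 0)]
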